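/- If 0 < p₀ < 1 − (8/9)^{1/2}, then there exists r > 0 with ξ_{1,r} = ξ_{2,r}. -/

import Mathlib

open Filter Real Topology

private lemma frac_le_frac {r a b : ℝ} (hr : 0 < r) (ha : 0 < a) (hb : 0 < b)
    (hab : a ≤ b) : a / (a + r) ≤ b / (b + r) := by
  rw [div_le_div_iff₀ (by linarith) (by linarith)]
  nlinarith

/-- Key comparison: the sign of `(1/3)^β₂ + (2/3)^β₂ - 2 p₁^β₂` (with
`β₂ = x₂/(x₂+r)`) determines the order of `x₁` and `x₂`. -/
private lemma key_comp (p1 r x1 x2 : ℝ) (hp1 : 0 < p1) (hr : 0 < r)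
    (hx1 : 0 < x1) (hx2 : 0 < x2)
    (e1 : ((1 / 3 : ℝ) * (8 : ℝ) ^ (-r)) ^ (x1 / (x1 + r)) +
        ((2 / 3 : ℝ) * (8 : ℝ) ^ (-r)) ^ (x1 / (x1 + r)) = 1)
    (e2 : 2 * (p1 * (8 : ℝ) ^ (-r)) ^ (x2 / (x2 + r)) = 1) :
    ((0 < (1/3 : ℝ) ^ (x2/(x2+r)) + (2/3 : ℝ) ^ (x2/(x2+r)) - 2 * p1 ^ (x2/(x2+r))) → x2 < x1) ∧
    (((1/3 : ℝ) ^ (x2/(x2+r)) + (2/3 : ℝ) ^ (x2/(x2+r)) - 2 * p1 ^ (x2/(x2+r)) < 0) → x1 < x2) := by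
  set β1 := x1 / (x1 + r) with hβ1
  set β2 := x2 / (x2 + r) with hβ2
  have hq : (0:ℝ) < (8:ℝ) ^ (-r) := Real.rpow_pos_of_pos (by norm_num) _
  have hq1 : (8:ℝ) ^ (-r) < 1 :=
    Real.rpow_lt_one_of_one_lt_of_neg (by norm_num) (by linarith)
  have ha1 : (0:ℝ) < (1/3 : ℝ) * (8:ℝ) ^ (-r) := by positivity
  have ha1' : (1/3 : ℝ) * (8:ℝ) ^ (-r) ≤ 1 := by nlinarith
  have ha2 : (0:ℝ) < (2/3 : ℝ) * (8:ℝ) ^ (-r) := by positivity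
  have ha2' : (2/3 : ℝ) * (8:ℝ) ^ (-r) ≤ 1 := by nlinarith
  -- expansions
  have hm1 : ((1/3 : ℝ) * (8:ℝ) ^ (-r)) ^ β2 = (1/3 : ℝ) ^ β2 * ((8:ℝ) ^ (-r)) ^ β2 :=
    Real.mul_rpow (by norm_num) hq.le
  have hm2 : ((2/3 : ℝ) * (8:ℝ) ^ (-r)) ^ β2 = (2/3 : ℝ) ^ β2 * ((8:ℝ) ^ (-r)) ^ β2 :=
    Real.mul_rpow (by norm_num) hq.le
  have hmp : (p1 * (8:ℝ) ^ (-r)) ^ β2 = p1 ^ β2 * ((8:ℝ) ^ (-r)) ^ β2 :=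
    Real.mul_rpow hp1.le hq.le
  have hPQ : p1 ^ β2 * ((8:ℝ) ^ (-r)) ^ β2 = 1/2 := by rw [← hmp]; linarith
  have hQpos : (0:ℝ) < ((8:ℝ) ^ (-r)) ^ β2 := Real.rpow_pos_of_pos hq _
  have hPpos : (0:ℝ) < p1 ^ β2 := Real.rpow_pos_of_pos hp1 _
  constructor
  · intro hG
    -- F β2 > 1 = F β1, F antitone ⇒ β2 < β1 ⇒ x2 < x1
    by_contra hcon
    push_neg at hcon  -- x1 ≤ x2
    have hββ : β1 ≤ β2 := frac_le_frac hr hx1 hx2 hcon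
    have hF2 : 1 < ((1/3 : ℝ) * (8:ℝ) ^ (-r)) ^ β2 + ((2/3 : ℝ) * (8:ℝ) ^ (-r)) ^ β2 := by
      rw [hm1, hm2]
      nlinarith
    have h1 : ((1/3 : ℝ) * (8:ℝ) ^ (-r)) ^ β2 ≤ ((1/3 : ℝ) * (8:ℝ) ^ (-r)) ^ β1 :=
      Real.rpow_le_rpow_of_exponent_ge ha1 ha1' hββ
    have h2 : ((2/3 : ℝ) * (8:ℝ) ^ (-r)) ^ β2 ≤ ((2/3 : ℝ) * (8:ℝ) ^ (-r)) ^ β1 :=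
      Real.rpow_le_rpow_of_exponent_ge ha2 ha2' hββ
    linarith
  · intro hG
    by_contra hcon
    push_neg at hcon  -- x2 ≤ x1
    have hββ : β2 ≤ β1 := frac_le_frac hr hx2 hx1 hcon
    have hF2 : ((1/3 : ℝ) * (8:ℝ) ^ (-r)) ^ β2 + ((2/3 : ℝ) * (8:ℝ) ^ (-r)) ^ β2 < 1 := by
      rw [hm1, hm2]
      nlinarith
    have h1 : ((1/3 : ℝ) * (8:ℝ) ^ (-r)) ^ β1 ≤ ((1/3 : ℝ) * (8:ℝ) ^ (-r)) ^ β2 :=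
      Real.rpow_le_rpow_of_exponent_ge ha1 ha1' hββ
    have h2 : ((2/3 : ℝ) * (8:ℝ) ^ (-r)) ^ β1 ≤ ((2/3 : ℝ) * (8:ℝ) ^ (-r)) ^ β2 :=
      Real.rpow_le_rpow_of_exponent_ge ha2 ha2' hββ
    linarith

/-- Explicit formula for the exponent `x₂/(x₂+r)` in the second equation. -/
private lemma beta_val (p1 r x2 : ℝ) (hp1 : 0 < p1) (hp1' : p1 < 1) (hr : 0 < r)
    (e2 : 2 * (p1 * (8 : ℝ) ^ (-r)) ^ (x2 / (x2 + r)) = 1) :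
    x2 / (x2 + r) = Real.log 2 / (r * Real.log 8 - Real.log p1) := by
  set β := x2 / (x2 + r) with hβ
  have hq : (0:ℝ) < (8:ℝ) ^ (-r) := Real.rpow_pos_of_pos (by norm_num) _
  have hb : (0:ℝ) < p1 * (8:ℝ) ^ (-r) := by positivity
  have he : (p1 * (8:ℝ) ^ (-r)) ^ β = 1/2 := by linarith
  have hlog := congrArg Real.log he
  rw [Real.log_rpow hb] at hlog
  have hm : Real.log (p1 * (8:ℝ) ^ (-r)) = Real.log p1 - r * Real.log 8 := by
    rw [Real.log_mul (ne_of_gt hp1) (ne_of_gt hq), Real.log_rpow (by norm_num)]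
    ring
  have h12 : Real.log (1/2 : ℝ) = -Real.log 2 := by
    rw [show (1/2 : ℝ) = 2⁻¹ by norm_num, Real.log_inv]
  rw [hm, h12] at hlog
  have hlp : Real.log p1 < 0 := Real.log_neg hp1 hp1'
  have hl8 : 0 < Real.log 8 := Real.log_pos (by norm_num)
  have hden : 0 < r * Real.log 8 - Real.log p1 := by nlinarith
  rw [eq_div_iff hden.ne']
  linear_combination -hlog

/-- If `0 < p₀ < 1 − (8/9)^{1/2}`, then there exists `r > 0` with
`ξ_{1,r} = ξ_{2,r}`. -/
theorem exists_xi_one_eq_xi_two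
    (p0 : ℝ) (hp0 : 0 < p0) (hp0' : p0 < 1 - Real.sqrt (8 / 9))
    (ξ1 ξ2 : ℝ → ℝ)
    (hξ1 : ∀ r : ℝ, 0 < r → 0 < ξ1 r ∧
      ((1 / 3 : ℝ) * (8 : ℝ) ^ (-r)) ^ (ξ1 r / (ξ1 r + r)) +
        ((2 / 3 : ℝ) * (8 : ℝ) ^ (-r)) ^ (ξ1 r / (ξ1 r + r)) = 1)
    (hξ2 : ∀ r : ℝ, 0 < r → 0 < ξ2 r ∧
      2 * ((1 - p0) / 2 * (8 : ℝ) ^ (-r)) ^ (ξ2 r / (ξ2 r + r)) = 1)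
    (hcont1 : ContinuousOn ξ1 (Set.Ioi 0)) (hcont2 : ContinuousOn ξ2 (Set.Ioi 0)) :
    ∃ r : ℝ, 0 < r ∧ ξ1 r = ξ2 r := by
  set p1 : ℝ := (1 - p0) / 2 with hp1def
  have hs0 : (0:ℝ) < Real.sqrt (8/9) := Real.sqrt_pos.2 (by norm_num)
  have hs1 : Real.sqrt (8/9) < 1 - p0 := by linarith
  have hsq : Real.sqrt (8/9) ^ 2 = 8/9 := Real.sq_sqrt (by norm_num)
  have hp1pos : 0 < p1 := by rw [hp1def]; linarith
  have hp1lt : p1 < 1/2 := by rw [hp1def]; linarith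
  have hp1sq : (2:ℝ)/9 < p1 ^ 2 := by
    have h1 : (8:ℝ)/9 < (1 - p0) ^ 2 := by nlinarith
    rw [hp1def]; nlinarith
  have hlp1 : Real.log p1 < 0 := Real.log_neg hp1pos (by linarith)
  have hl2 : 0 < Real.log 2 := Real.log_pos (by norm_num)
  have hl8 : 0 < Real.log 8 := Real.log_pos (by norm_num)
  set βs : ℝ := Real.log 2 / (-Real.log p1) with hβs
  have hβspos : 0 < βs := div_pos hl2 (by linarith)
  have hβslt1 : βs < 1 := by
    rw [hβs, div_lt_one (by linarith)]
    have h := Real.log_lt_log hp1pos hp1lt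
    rw [show (1/2 : ℝ) = 2⁻¹ by norm_num, Real.log_inv] at h
    linarith
  set G : ℝ → ℝ := fun β => (1/3 : ℝ) ^ β + (2/3 : ℝ) ^ β - 2 * p1 ^ β with hGdef
  -- continuity of G
  have hGc : Continuous G := by
    apply Continuous.sub
    · exact Continuous.add
        (continuous_iff_continuousAt.2 fun x => Real.continuousAt_const_rpow (by norm_num))
        (continuous_iff_continuousAt.2 fun x => Real.continuousAt_const_rpow (by norm_num))
    · exact continuous_const.mul
        (continuous_iff_continuousAt.2 fun x => Real.continuousAt_const_rpow hp1pos.ne')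
  -- G βs > 0
  have hpβ : p1 ^ βs = 1/2 := by
    rw [Real.rpow_def_of_pos hp1pos]
    have hne : -Real.log p1 ≠ 0 := by linarith
    have h : Real.log p1 * βs = -Real.log 2 := by
      rw [hβs, mul_div_assoc', div_neg, mul_div_cancel_left₀ _ hlp1.ne]
    rw [h, Real.exp_neg, Real.exp_log (by norm_num)]
    norm_num
  have h13 : (1/3 : ℝ) < (1/3 : ℝ) ^ βs := by
    have h := Real.rpow_lt_rpow_of_exponent_gt (x := 1/3) (by norm_num) (by norm_num) hβslt1
    rwa [Real.rpow_one] at h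
  have h23 : (2/3 : ℝ) < (2/3 : ℝ) ^ βs := by
    have h := Real.rpow_lt_rpow_of_exponent_gt (x := 2/3) (by norm_num) (by norm_num) hβslt1
    rwa [Real.rpow_one] at h
  have hGβs : 0 < G βs := by
    simp only [hGdef, hpβ]; linarith
  -- find βa ∈ (0, βs) with G βa > 0
  have hev1 : ∀ᶠ β in 𝓝[<] βs, 0 < G β :=
    ((hGc.continuousAt.eventually (eventually_gt_nhds hGβs)).filter_mono nhdsWithin_le_nhds)
  have hIoo1 : ∀ᶠ β in 𝓝[<] βs, β ∈ Set.Ioo 0 βs :=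
    Ioo_mem_nhdsLT_of_mem ⟨hβspos, le_refl βs⟩
  obtain ⟨βa, hGβa, hβaIoo⟩ := (hev1.and hIoo1).exists
  -- find βb ∈ (0, βs) with G βb < 0, via the derivative of G at 0
  have hd1 : HasDerivAt (fun β : ℝ => (1/3 : ℝ) ^ β)
      ((1/3 : ℝ) ^ (0:ℝ) * Real.log (1/3)) 0 :=
    (Real.hasStrictDerivAt_const_rpow (by norm_num) 0).hasDerivAt
  have hd2 : HasDerivAt (fun β : ℝ => (2/3 : ℝ) ^ β)
      ((2/3 : ℝ) ^ (0:ℝ) * Real.log (2/3)) 0 :=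
    (Real.hasStrictDerivAt_const_rpow (by norm_num) 0).hasDerivAt
  have hd3 : HasDerivAt (fun β : ℝ => 2 * p1 ^ β)
      (2 * (p1 ^ (0:ℝ) * Real.log p1)) 0 :=
    ((Real.hasStrictDerivAt_const_rpow hp1pos 0).hasDerivAt).const_mul 2
  have hD : HasDerivAt G
      (Real.log (1/3) + Real.log (2/3) - 2 * Real.log p1) 0 := by
    have h := (hd1.add hd2).sub hd3
    simp only [Real.rpow_zero, one_mul] at h
    exact h
  have hdneg : Real.log (1/3) + Real.log (2/3) - 2 * Real.log p1 < 0 := by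
    have h1 : Real.log (2/9 : ℝ) < Real.log (p1 ^ 2) := Real.log_lt_log (by norm_num) hp1sq
    have h2 : Real.log (p1 ^ 2) = 2 * Real.log p1 := by
      rw [Real.log_pow]; push_cast; ring
    have h3 : Real.log (1/3 : ℝ) = -Real.log 3 := by
      rw [show (1/3 : ℝ) = 3⁻¹ by norm_num, Real.log_inv]
    have h4 : Real.log (2/3 : ℝ) = Real.log 2 - Real.log 3 :=
      Real.log_div (by norm_num) (by norm_num)
    have h5 : Real.log (2/9 : ℝ) = Real.log 2 - 2 * Real.log 3 := by
      rw [Real.log_div (by norm_num) (by norm_num),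
        show (9:ℝ) = 3 ^ 2 by norm_num, Real.log_pow]
      push_cast; ring
    rw [h2, h5] at h1
    rw [h3, h4]
    linarith
  have hG0 : G 0 = 0 := by simp [hGdef]; norm_num
  rw [hasDerivAt_iff_tendsto_slope] at hD
  have hmono : 𝓝[>] (0:ℝ) ≤ 𝓝[≠] (0:ℝ) :=
    nhdsWithin_mono 0 fun x hx => ne_of_gt hx
  have hev2 : ∀ᶠ β in 𝓝[>] (0:ℝ), slope G 0 β < 0 :=
    (hD.mono_left hmono).eventually (eventually_lt_nhds hdneg)
  have hIoo2 : ∀ᶠ β in 𝓝[>] (0:ℝ), β ∈ Set.Ioo 0 βs :=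
    Ioo_mem_nhdsGT_of_mem ⟨le_refl (0:ℝ), hβspos⟩
  obtain ⟨βb, hslope, hβbIoo⟩ := (hev2.and hIoo2).exists
  have hGβb : G βb < 0 := by
    rw [slope_def_field, hG0, sub_zero, sub_zero] at hslope
    rcases div_neg_iff.mp hslope with ⟨_, h⟩ | ⟨h, _⟩
    · linarith [hβbIoo.1]
    · exact h
  -- construction of r from β
  have hl2βs : Real.log 2 / βs = -Real.log p1 := by
    rw [hβs]; field_simp
  have hrofβ : ∀ β : ℝ, β ∈ Set.Ioo 0 βs →
      ∃ r : ℝ, 0 < r ∧ ξ2 r / (ξ2 r + r) = β := by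
    intro β hβ
    refine ⟨(Real.log 2 / β + Real.log p1) / Real.log 8, ?_, ?_⟩
    · have h : Real.log 2 / βs < Real.log 2 / β :=
        div_lt_div_of_pos_left hl2 hβ.1 hβ.2
      rw [hl2βs] at h
      apply div_pos _ hl8
      linarith
    · set r := (Real.log 2 / β + Real.log p1) / Real.log 8 with hrdef
      have hrpos : 0 < r := by
        have h : Real.log 2 / βs < Real.log 2 / β :=
          div_lt_div_of_pos_left hl2 hβ.1 hβ.2
        rw [hl2βs] at h
        rw [hrdef]; apply div_pos _ hl8; linarith
      obtain ⟨hx2, e2⟩ := hξ2 r hrpos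
      have hbv := beta_val p1 r (ξ2 r) hp1pos (by linarith) hrpos e2
      rw [hbv]
      have hr8 : r * Real.log 8 = Real.log 2 / β + Real.log p1 := by
        rw [hrdef]; field_simp
      rw [hr8]
      rw [add_sub_cancel_right, div_div_eq_mul_div, mul_comm, mul_div_assoc,
        div_self hl2.ne', mul_one]
  -- ra : ξ2 ra < ξ1 ra
  obtain ⟨ra, hra, hbra⟩ := hrofβ βa hβaIoo
  obtain ⟨rb, hrb, hbrb⟩ := hrofβ βb hβbIoo
  obtain ⟨hx1a, e1a⟩ := hξ1 ra hra
  obtain ⟨hx2a, e2a⟩ := hξ2 ra hra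
  obtain ⟨hx1b, e1b⟩ := hξ1 rb hrb
  obtain ⟨hx2b, e2b⟩ := hξ2 rb hrb
  have hka := key_comp p1 ra (ξ1 ra) (ξ2 ra) hp1pos hra hx1a hx2a e1a e2a
  have hkb := key_comp p1 rb (ξ1 rb) (ξ2 rb) hp1pos hrb hx1b hx2b e1b e2b
  have hfa : ξ2 ra < ξ1 ra := by
    apply hka.1
    rw [hbra]
    simpa [hGdef] using hGβa
  have hfb : ξ1 rb < ξ2 rb := by
    apply hkb.2
    rw [hbrb]
    simpa [hGdef] using hGβb
  -- intermediate value theorem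
  have hsub : Set.uIcc ra rb ⊆ Set.Ioi 0 := by
    intro x hx
    rcases Set.mem_uIcc.mp hx with ⟨h, _⟩ | ⟨h, _⟩
    · exact lt_of_lt_of_le hra h
    · exact lt_of_lt_of_le hrb h
  have hfc : ContinuousOn (fun r => ξ1 r - ξ2 r) (Set.uIcc ra rb) :=
    (hcont1.sub hcont2).mono hsub
  have h0mem : (0:ℝ) ∈ Set.uIcc (ξ1 ra - ξ2 ra) (ξ1 rb - ξ2 rb) :=
    Set.mem_uIcc.2 (Or.inr ⟨by linarith, by linarith⟩)
  obtain ⟨r, hrmem, hfr⟩ := intermediate_value_uIcc hfc h0mem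
  exact ⟨r, hsub hrmem, by linarith [sub_eq_zero.mp hfr]⟩
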